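/- Let c > 0 and r₂ > 19/10. There exists N₀ > 0 such that for every N ≥ N₀ there is a constant C > 0 (depending on c, r₂, N) such that for all t ≥ 0 and all x ∈ ℝ³, ∫_{ℝ³} (1 + (|x−y| − c t)²/(1+t))^{−N} (1 + |y|²)^{−r₂} dy ≤ C (1 + (|x| − c t)²/(1+t))^{−1}. -/

import Mathlib

open MeasureTheory Real

local notation "E3" => EuclideanSpace ℝ (Fin 3)

lemma young_aux {a b : ℝ} (ha : 0 ≤ a) (hb : 0 ≤ b) :
    a * b ≤ a ^ ((5:ℝ)/2) + b ^ ((5:ℝ)/3) := by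
  rcases le_or_gt b (a ^ ((3:ℝ)/2)) with h | h
  · calc a * b ≤ a * a ^ ((3:ℝ)/2) := by gcongr
    _ = a ^ ((5:ℝ)/2) := by
        nth_rewrite 1 [← Real.rpow_one a]
        rw [← Real.rpow_add' ha (by norm_num)]; norm_num
    _ ≤ _ := le_add_of_nonneg_right (Real.rpow_nonneg hb _)
  · have h2 : a ≤ b ^ ((2:ℝ)/3) := by
      have := Real.rpow_le_rpow (Real.rpow_nonneg ha _) h.le (by norm_num : (0:ℝ) ≤ 2/3)
      rwa [← Real.rpow_mul ha, show (3:ℝ)/2 * (2/3) = 1 by norm_num, Real.rpow_one] at this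
    calc a * b ≤ b ^ ((2:ℝ)/3) * b := by gcongr
    _ = b ^ ((5:ℝ)/3) := by
        nth_rewrite 2 [← Real.rpow_one b]
        rw [← Real.rpow_add' hb (by norm_num)]; norm_num
    _ ≤ _ := le_add_of_nonneg_left (Real.rpow_nonneg ha _)

lemma integrable_jb {s : ℝ} (hs : 3 < 2 * s) :
    Integrable (fun y : E3 => (1 + ‖y‖ ^ 2) ^ (-s)) := by
  have hdim : (Module.finrank ℝ E3 : ℝ) < 2 * s := by
    simpa [finrank_euclideanSpace] using hs
  have hbase : Integrable (fun y : E3 => (1 + ‖y‖) ^ (-(2*s))) :=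
    integrable_one_add_norm hdim
  refine (hbase.const_mul ((2:ℝ) ^ s)).mono' ?_ ?_
  · apply Continuous.aestronglyMeasurable
    apply Continuous.rpow_const
    · exact continuous_const.add (continuous_norm.pow 2)
    · intro y; left; positivity
  · refine Filter.Eventually.of_forall fun y => ?_
    have h1 : (0:ℝ) < 1 + ‖y‖ ^ 2 := by positivity
    have h2 : (0:ℝ) < 1 + ‖y‖ := by positivity
    rw [Real.norm_of_nonneg (Real.rpow_nonneg h1.le _)]
    have key : ((1 + ‖y‖) ^ (2:ℝ)) / 2 ≤ 1 + ‖y‖ ^ 2 := by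
      rw [Real.rpow_two]
      calc (1 + ‖y‖) ^ 2 / 2 = 1 + ‖y‖ ^ 2 - (1 - ‖y‖) ^ 2 / 2 := by ring
      _ ≤ 1 + ‖y‖ ^ 2 := by linarith [sq_nonneg (1 - ‖y‖)]
    calc (1 + ‖y‖ ^ 2) ^ (-s) ≤ (((1 + ‖y‖) ^ (2:ℝ)) / 2) ^ (-s) := by
          apply Real.rpow_le_rpow_of_nonpos (by positivity) key (by linarith)
    _ = (2:ℝ) ^ s * (1 + ‖y‖) ^ (-(2*s)) := by
        rw [Real.div_rpow (Real.rpow_nonneg h2.le _) (by norm_num), ← Real.rpow_mul h2.le,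
          Real.rpow_neg (by norm_num : (0:ℝ) ≤ 2), div_eq_mul_inv, mul_comm,
          ← Real.rpow_neg (by norm_num : (0:ℝ) ≤ 2)]
        rw [← Real.rpow_neg_one ((2:ℝ)^(-s)), ← Real.rpow_mul (by norm_num : (0:ℝ) ≤ 2)]; ring_nf

lemma oneD_integrable {τ m : ℝ} (hτ : 1 ≤ τ) (hm : 1 ≤ m) :
    Integrable (fun s : ℝ => (1 + s ^ 2 / τ) ^ (-m)) := by
  have hτ0 : (0:ℝ) < τ := by linarith
  have hst : (0:ℝ) < Real.sqrt τ := Real.sqrt_pos.2 hτ0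
  have hbase : Integrable (fun s : ℝ => (1 + (s / Real.sqrt τ) ^ 2)⁻¹) := by
    have := integrable_inv_one_add_sq.comp_mul_right' (R := (Real.sqrt τ)⁻¹) (by positivity)
    · simpa [div_eq_mul_inv] using this
  refine hbase.mono' ?_ (Filter.Eventually.of_forall fun s => ?_)
  · apply Continuous.aestronglyMeasurable
    apply Continuous.rpow_const
    · exact continuous_const.add ((continuous_pow 2).div_const τ)
    · intro y; left; positivity
  · have h1 : (0:ℝ) < 1 + s ^ 2 / τ := by positivity
    have hsq : (s / Real.sqrt τ) ^ 2 = s ^ 2 / τ := by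
      rw [div_pow, Real.sq_sqrt hτ0.le]
    rw [Real.norm_of_nonneg (Real.rpow_nonneg h1.le _), hsq]
    calc (1 + s ^ 2 / τ) ^ (-m) ≤ (1 + s ^ 2 / τ) ^ (-1 : ℝ) :=
          Real.rpow_le_rpow_of_exponent_le (by linarith [div_nonneg (sq_nonneg s) hτ0.le]) (by linarith)
    _ = (1 + s ^ 2 / τ)⁻¹ := Real.rpow_neg_one _

lemma oneD_bound {τ m : ℝ} (hτ : 1 ≤ τ) (hm : 1 ≤ m) :
    ∫ s : ℝ, (1 + s ^ 2 / τ) ^ (-m) ≤ Real.sqrt τ * π := by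
  have hτ0 : (0:ℝ) < τ := by linarith
  have hst : (0:ℝ) < Real.sqrt τ := Real.sqrt_pos.2 hτ0
  have hbase : Integrable (fun s : ℝ => (1 + (s / Real.sqrt τ) ^ 2)⁻¹) := by
    have := integrable_inv_one_add_sq.comp_mul_right' (R := (Real.sqrt τ)⁻¹) (by positivity)
    · simpa [div_eq_mul_inv] using this
  have hle : ∫ s : ℝ, (1 + s ^ 2 / τ) ^ (-m) ≤ ∫ s : ℝ, (1 + (s / Real.sqrt τ) ^ 2)⁻¹ := by
    refine integral_mono_of_nonneg (Filter.Eventually.of_forall fun s => ?_) hbase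
      (Filter.Eventually.of_forall fun s => ?_)
    · exact Real.rpow_nonneg (by positivity) _
    · show (1 + s ^ 2 / τ) ^ (-m) ≤ (1 + (s / Real.sqrt τ) ^ 2)⁻¹
      have h1 : (0:ℝ) < 1 + s ^ 2 / τ := by positivity
      have hsq : (s / Real.sqrt τ) ^ 2 = s ^ 2 / τ := by
        rw [div_pow, Real.sq_sqrt hτ0.le]
      rw [hsq]
      calc (1 + s ^ 2 / τ) ^ (-m) ≤ (1 + s ^ 2 / τ) ^ (-1 : ℝ) :=
            Real.rpow_le_rpow_of_exponent_le (by linarith [div_nonneg (sq_nonneg s) hτ0.le]) (by linarith)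
      _ = (1 + s ^ 2 / τ)⁻¹ := Real.rpow_neg_one _
  have heq : ∫ s : ℝ, (1 + (s / Real.sqrt τ) ^ 2)⁻¹ = Real.sqrt τ * π := by
    rw [MeasureTheory.Measure.integral_comp_div (fun u : ℝ => (1 + u ^ 2)⁻¹) (Real.sqrt τ),
      integral_univ_inv_one_add_sq, abs_of_pos hst, smul_eq_mul]
  linarith

lemma shell_ptwise {τ b : ℝ} (hτ : 1 ≤ τ) (hb : 0 ≤ b) (w z : ℝ) (hz : z = w + b) :
    (1 + z ^ 2) / (2 * τ * (1 + b ^ 2)) ≤ 1 + w ^ 2 / τ := by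
  have hτ0 : (0:ℝ) < τ := by linarith
  rw [div_le_iff₀ (by positivity)]
  have h1 : z ^ 2 ≤ 2 * w ^ 2 + 2 * b ^ 2 := by
    subst hz
    calc (w + b) ^ 2 = 2 * w ^ 2 + 2 * b ^ 2 - (w - b) ^ 2 := by ring
    _ ≤ 2 * w ^ 2 + 2 * b ^ 2 := by linarith [sq_nonneg (w - b)]
  have h2 : (1 + w ^ 2 / τ) * (2 * τ * (1 + b ^ 2)) = 2 * τ * (1 + b ^ 2) + 2 * w ^ 2 * (1 + b ^ 2) := by
    field_simp
  rw [h2]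
  have e1 : 2 * (1 + b ^ 2) ≤ 2 * τ * (1 + b ^ 2) := by
    have h3 : (2:ℝ) * 1 * (1 + b ^ 2) ≤ 2 * τ * (1 + b ^ 2) := by
      apply mul_le_mul_of_nonneg_right _ (by positivity)
      linarith
    linarith
  have e2 : 2 * w ^ 2 ≤ 2 * w ^ 2 * (1 + b ^ 2) := by
    have h4 : 2 * w ^ 2 * 1 ≤ 2 * w ^ 2 * (1 + b ^ 2) := by
      apply mul_le_mul_of_nonneg_left _ (by positivity)
      linarith [sq_nonneg b]
    linarith
  linarith

lemma shell_integrable {τ b m : ℝ} (hτ : 1 ≤ τ) (hb : 0 ≤ b) (hm : 2 ≤ m) :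
    Integrable (fun z : E3 => (1 + (‖z‖ - b) ^ 2 / τ) ^ (-m)) := by
  have hτ0 : (0:ℝ) < τ := by linarith
  have hjb : Integrable (fun z : E3 => (1 + ‖z‖ ^ 2) ^ (-m)) := by
    apply integrable_jb; linarith
  refine (hjb.const_mul ((2 * τ * (1 + b ^ 2)) ^ m)).mono' ?_
    (Filter.Eventually.of_forall fun z => ?_)
  · apply Continuous.aestronglyMeasurable
    apply Continuous.rpow_const
    · exact continuous_const.add (((continuous_norm.sub continuous_const).pow 2).div_const τ)
    · intro y; left; positivity
  · have h1 : (0:ℝ) < 1 + (‖z‖ - b) ^ 2 / τ := by positivity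
    have hK : (0:ℝ) < 2 * τ * (1 + b ^ 2) := by positivity
    rw [Real.norm_of_nonneg (Real.rpow_nonneg h1.le _)]
    have key := shell_ptwise hτ hb (‖z‖ - b) ‖z‖ (by ring)
    calc (1 + (‖z‖ - b) ^ 2 / τ) ^ (-m)
        ≤ ((1 + ‖z‖ ^ 2) / (2 * τ * (1 + b ^ 2))) ^ (-m) :=
          Real.rpow_le_rpow_of_nonpos (by positivity) key (by linarith)
    _ = (2 * τ * (1 + b ^ 2)) ^ m * (1 + ‖z‖ ^ 2) ^ (-m) := by
        rw [Real.div_rpow (by positivity) hK.le, Real.rpow_neg hK.le m, div_inv_eq_mul, mul_comm]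

lemma shell_bound {τ b m : ℝ} (hτ : 1 ≤ τ) (hb : 0 ≤ b) (hm : 2 ≤ m) :
    ∫ z : E3, (1 + (‖z‖ - b) ^ 2 / τ) ^ (-m)
      ≤ 6 * π * (volume (Metric.ball (0:E3) 1)).toReal * (Real.sqrt τ * (τ + b ^ 2)) := by
  have hτ0 : (0:ℝ) < τ := by linarith
  set V : ℝ := (volume (Metric.ball (0:E3) 1)).toReal with hV
  have hV0 : 0 ≤ V := ENNReal.toReal_nonneg
  have h := integral_fun_norm_addHaar (volume : Measure E3)
    (fun r : ℝ => (1 + (r - b) ^ 2 / τ) ^ (-m))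
  rw [show Module.finrank ℝ E3 = 3 from finrank_euclideanSpace_fin] at h
  rw [h]
  -- now bound the 1D integral J
  set J := ∫ y in Set.Ioi (0:ℝ), y ^ (3-1) • (1 + (y - b) ^ 2 / τ) ^ (-m) with hJ
  have hm1 : (1:ℝ) ≤ m - 1 := by linarith
  have hg1 : Integrable (fun y : ℝ => (1 + (y - b) ^ 2 / τ) ^ (-(m-1))) :=
    (oneD_integrable hτ hm1).comp_sub_right b
  have hg2 : Integrable (fun y : ℝ => (1 + (y - b) ^ 2 / τ) ^ (-m)) :=
    (oneD_integrable hτ (by linarith)).comp_sub_right b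
  have hg : Integrable (fun y : ℝ =>
      2*τ*(1 + (y - b) ^ 2 / τ) ^ (-(m-1)) + 2*b^2*(1 + (y - b) ^ 2 / τ) ^ (-m)) :=
    (hg1.const_mul _).add (hg2.const_mul _)
  have hgnn : ∀ y : ℝ, 0 ≤ 2*τ*(1 + (y - b) ^ 2 / τ) ^ (-(m-1)) + 2*b^2*(1 + (y - b) ^ 2 / τ) ^ (-m) := by
    intro y
    have := Real.rpow_nonneg (show (0:ℝ) ≤ 1 + (y - b) ^ 2 / τ by positivity) (-(m-1))
    have := Real.rpow_nonneg (show (0:ℝ) ≤ 1 + (y - b) ^ 2 / τ by positivity) (-m)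
    positivity
  have step1 : J ≤ ∫ y, 2*τ*(1 + (y - b) ^ 2 / τ) ^ (-(m-1)) + 2*b^2*(1 + (y - b) ^ 2 / τ) ^ (-m) := by
    have hJle : J ≤ ∫ y in Set.Ioi (0:ℝ),
        (2*τ*(1 + (y - b) ^ 2 / τ) ^ (-(m-1)) + 2*b^2*(1 + (y - b) ^ 2 / τ) ^ (-m)) := by
      refine integral_mono_of_nonneg (Filter.Eventually.of_forall fun y => ?_)
        (hg.integrableOn) (Filter.Eventually.of_forall fun y => ?_)
      · have h0 := Real.rpow_nonneg (show (0:ℝ) ≤ 1 + (y - b) ^ 2 / τ by positivity) (-m)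
        show 0 ≤ y ^ (3-1) • (1 + (y - b) ^ 2 / τ) ^ (-m)
        rw [show (3-1 : ℕ) = 2 by norm_num, smul_eq_mul]
        positivity
      · show y ^ (3-1) • (1 + (y - b) ^ 2 / τ) ^ (-m) ≤ _
        have hX : (0:ℝ) < 1 + (y - b) ^ 2 / τ := by positivity
        have hXnn := Real.rpow_nonneg hX.le (-m)
        have hy2 : y ^ (3-1) = y ^ 2 := by norm_num
        rw [hy2, smul_eq_mul]
        have hsplit : y ^ 2 ≤ 2*(y-b)^2 + 2*b^2 := by
          calc y ^ 2 = 2*(y-b)^2 + 2*b^2 - (y - 2*b)^2 := by ring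
          _ ≤ 2*(y-b)^2 + 2*b^2 := by linarith [sq_nonneg (y - 2*b)]
        have hterm : (y-b)^2 * (1 + (y - b) ^ 2 / τ) ^ (-m) ≤ τ * (1 + (y - b) ^ 2 / τ) ^ (-(m-1)) := by
          have h1 : (y-b)^2 ≤ τ * (1 + (y - b) ^ 2 / τ) := by
            rw [mul_add, mul_one, mul_div_cancel₀ _ hτ0.ne']; linarith
          calc (y-b)^2 * (1 + (y - b) ^ 2 / τ) ^ (-m)
              ≤ τ * (1 + (y - b) ^ 2 / τ) * (1 + (y - b) ^ 2 / τ) ^ (-m) := by gcongr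
          _ = τ * (1 + (y - b) ^ 2 / τ) ^ (-(m-1)) := by
              rw [mul_assoc]
              congr 1
              rw [show -(m-1) = 1 + -m by ring, Real.rpow_add hX, Real.rpow_one]
        calc y ^ 2 * (1 + (y - b) ^ 2 / τ) ^ (-m)
            ≤ (2*(y-b)^2 + 2*b^2) * (1 + (y - b) ^ 2 / τ) ^ (-m) := by gcongr
        _ = 2*((y-b)^2 * (1 + (y - b) ^ 2 / τ) ^ (-m)) + 2*b^2*(1 + (y - b) ^ 2 / τ) ^ (-m) := by ring
        _ ≤ 2*(τ * (1 + (y - b) ^ 2 / τ) ^ (-(m-1))) + 2*b^2*(1 + (y - b) ^ 2 / τ) ^ (-m) := by gcongr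
        _ = _ := by ring
    exact hJle.trans (setIntegral_le_integral hg (Filter.Eventually.of_forall hgnn))
  have step2 : ∫ y, (2*τ*(1 + (y - b) ^ 2 / τ) ^ (-(m-1)) + 2*b^2*(1 + (y - b) ^ 2 / τ) ^ (-m))
      ≤ 2 * π * (Real.sqrt τ * (τ + b ^ 2)) := by
    rw [integral_add (hg1.const_mul _) (hg2.const_mul _), integral_const_mul, integral_const_mul]
    have e1 : ∫ y : ℝ, (1 + (y - b) ^ 2 / τ) ^ (-(m-1)) = ∫ s : ℝ, (1 + s ^ 2 / τ) ^ (-(m-1)) :=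
      integral_sub_right_eq_self (fun s : ℝ => (1 + s ^ 2 / τ) ^ (-(m-1))) b
    have e2 : ∫ y : ℝ, (1 + (y - b) ^ 2 / τ) ^ (-m) = ∫ s : ℝ, (1 + s ^ 2 / τ) ^ (-m) :=
      integral_sub_right_eq_self (fun s : ℝ => (1 + s ^ 2 / τ) ^ (-m)) b
    rw [e1, e2]
    have b1 := oneD_bound hτ hm1
    have b2 := oneD_bound hτ (show (1:ℝ) ≤ m by linarith)
    have i1nn : 0 ≤ ∫ s : ℝ, (1 + s ^ 2 / τ) ^ (-(m-1)) :=
      integral_nonneg fun s => Real.rpow_nonneg (by positivity) _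
    have i2nn : 0 ≤ ∫ s : ℝ, (1 + s ^ 2 / τ) ^ (-m) :=
      integral_nonneg fun s => Real.rpow_nonneg (by positivity) _
    have hπ : (0:ℝ) < π := Real.pi_pos
    have hsτ : 0 ≤ Real.sqrt τ := Real.sqrt_nonneg τ
    have j1 : 2 * τ * (∫ s : ℝ, (1 + s ^ 2 / τ) ^ (-(m-1))) ≤ 2 * τ * (Real.sqrt τ * π) :=
      mul_le_mul_of_nonneg_left b1 (by positivity)
    have j2 : 2 * b ^ 2 * (∫ s : ℝ, (1 + s ^ 2 / τ) ^ (-m)) ≤ 2 * b ^ 2 * (Real.sqrt τ * π) :=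
      mul_le_mul_of_nonneg_left b2 (by positivity)
    have j3 : 2 * τ * (Real.sqrt τ * π) + 2 * b ^ 2 * (Real.sqrt τ * π)
        = 2 * π * (Real.sqrt τ * (τ + b ^ 2)) := by ring
    linarith
  calc (3 : ℕ) • (V • J) = 3 * (V * J) := by simp [smul_eq_mul]
  _ ≤ 3 * (V * (2 * π * (Real.sqrt τ * (τ + b ^ 2)))) := by
      have h2 := mul_le_mul_of_nonneg_left (step1.trans step2) hV0
      linarith
  _ = 6 * π * V * (Real.sqrt τ * (τ + b ^ 2)) := by ring

set_option maxHeartbeats 1000000 in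
/-- Estimate ℐ₃ of Lemma A.3: convolution of the Huygens wave profile with a
spatially decaying initial datum. -/
theorem stmt_2 (c r₂ : ℝ) (hc : 0 < c) (hr₂ : r₂ > 19 / 10) :
    ∃ N₀ : ℝ, 0 < N₀ ∧ ∀ N : ℝ, N₀ ≤ N →
      ∃ C : ℝ, 0 < C ∧ ∀ t : ℝ, 0 ≤ t → ∀ x : EuclideanSpace ℝ (Fin 3),
        (∫ y : EuclideanSpace ℝ (Fin 3),
            (1 + (‖x - y‖ - c * t) ^ 2 / (1 + t)) ^ (-N) * (1 + ‖y‖ ^ 2) ^ (-r₂))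
          ≤ C * (1 + (‖x‖ - c * t) ^ 2 / (1 + t)) ^ (-1 : ℝ) := by
  refine ⟨2, by norm_num, fun N hN => ?_⟩
  set V : ℝ := (volume (Metric.ball (0:E3) 1)).toReal with hVdef
  have hV0 : 0 ≤ V := ENNReal.toReal_nonneg
  set s₂ : ℝ := 5/3*(r₂-1) with hs₂def
  have hs₂ : 3 < 2 * s₂ := by rw [hs₂def]; linarith
  have hΨ₁i : Integrable (fun y : E3 => (1 + ‖y‖ ^ 2) ^ (-r₂)) :=
    integrable_jb (by linarith)
  have hΨ₂i : Integrable (fun y : E3 => (1 + ‖y‖ ^ 2) ^ (-s₂)) := integrable_jb hs₂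
  set Ψ₁ : ℝ := ∫ y : E3, (1 + ‖y‖ ^ 2) ^ (-r₂) with hΨ₁def
  set Ψ₂ : ℝ := ∫ y : E3, (1 + ‖y‖ ^ 2) ^ (-s₂) with hΨ₂def
  have hΨ₁0 : 0 ≤ Ψ₁ := integral_nonneg fun y => Real.rpow_nonneg (by positivity) _
  have hΨ₂0 : 0 ≤ Ψ₂ := integral_nonneg fun y => Real.rpow_nonneg (by positivity) _
  set K : ℝ := 6 * π * V * (1 + c ^ 2) with hKdef
  have hK0 : 0 ≤ K := by rw [hKdef]; positivity
  refine ⟨6*Ψ₁ + 2*K + 2*(4:ℝ)^((5:ℝ)/3)*Ψ₂ + 1, by positivity, fun t ht x => ?_⟩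
  set τ : ℝ := 1 + t with hτdef
  have hτ : 1 ≤ τ := by rw [hτdef]; linarith
  have hτ0 : (0:ℝ) < τ := by linarith
  set C : ℝ := 6*Ψ₁ + 2*K + 2*(4:ℝ)^((5:ℝ)/3)*Ψ₂ + 1 with hCdef
  set a : ℝ := ‖x‖ - c * t with hadef
  set D : ℝ := 1 + a ^ 2 / τ with hDdef
  have hD1 : 1 ≤ D := by rw [hDdef]; have : 0 ≤ a^2/τ := by positivity
                         linarith
  have hD0 : (0:ℝ) < D := by linarith
  have hDinv0 : (0:ℝ) < D⁻¹ := by positivity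
  have hRHS : C * D ^ (-1:ℝ) = C * D⁻¹ := by rw [Real.rpow_neg_one]
  rw [hRHS]
  set φ : E3 → ℝ := fun y => (1 + (‖x - y‖ - c * t) ^ 2 / τ) ^ (-N) with hφdef
  set ψ : E3 → ℝ := fun y => (1 + ‖y‖ ^ 2) ^ (-r₂) with hψdef
  have hφnn : ∀ y, 0 ≤ φ y := fun y => Real.rpow_nonneg (by positivity) _
  have hψnn : ∀ y, 0 ≤ ψ y := fun y => Real.rpow_nonneg (by positivity) _
  have hφ1 : ∀ y, φ y ≤ 1 := fun y =>
    Real.rpow_le_one_of_one_le_of_nonpos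
      (by have : (0:ℝ) ≤ (‖x - y‖ - c * t) ^ 2 / τ := by positivity
          linarith) (by linarith)
  have hf_int : Integrable (fun y : E3 => φ y * ψ y) := by
    refine hΨ₁i.mono' ?_ (Filter.Eventually.of_forall fun y => ?_)
    · apply Continuous.aestronglyMeasurable
      apply Continuous.mul
      · apply Continuous.rpow_const
        · exact continuous_const.add
            ((((continuous_const.sub continuous_id').norm.sub continuous_const).pow 2).div_const τ)
        · intro y; left; positivity
      · apply Continuous.rpow_const
        · exact continuous_const.add (continuous_norm.pow 2)
        · intro y; left; positivity
    · rw [Real.norm_of_nonneg (mul_nonneg (hφnn y) (hψnn y))]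
      calc φ y * ψ y ≤ 1 * ψ y := by exact mul_le_mul_of_nonneg_right (hφ1 y) (hψnn y)
      _ = ψ y := one_mul _
  show (∫ y : E3, φ y * ψ y) ≤ C * D⁻¹
  by_cases hcase : a ^ 2 ≤ τ
  · -- Case 1 : trivial bound
    have hIle : (∫ y : E3, φ y * ψ y) ≤ Ψ₁ := by
      refine integral_mono_of_nonneg
        (Filter.Eventually.of_forall fun y => mul_nonneg (hφnn y) (hψnn y)) hΨ₁i
        (Filter.Eventually.of_forall fun y => ?_)
      calc φ y * ψ y ≤ 1 * ψ y := by exact mul_le_mul_of_nonneg_right (hφ1 y) (hψnn y)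
      _ = ψ y := one_mul _
    have hD2 : D ≤ 2 := by
      rw [hDdef]
      have : a^2/τ ≤ 1 := (div_le_one hτ0).2 hcase
      linarith
    have h1 : (1:ℝ) ≤ 2 * D⁻¹ := by
      rw [← div_eq_mul_inv, le_div_iff₀ hD0, one_mul]; exact hD2
    calc (∫ y : E3, φ y * ψ y) ≤ Ψ₁ := hIle
    _ = Ψ₁ * 1 := (mul_one _).symm
    _ ≤ Ψ₁ * (2 * D⁻¹) := by gcongr
    _ = 2*Ψ₁ * D⁻¹ := by ring
    _ ≤ C * D⁻¹ := by
        have h2 : 2*Ψ₁ ≤ C := by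
          rw [hCdef]
          have h5 : (0:ℝ) ≤ 2*(4:ℝ)^((5:ℝ)/3)*Ψ₂ := by positivity
          linarith
        exact mul_le_mul_of_nonneg_right h2 hDinv0.le
  · -- Case 2
    push_neg at hcase
    set α : ℝ := |a| with hαdef
    have hα2 : τ < α ^ 2 := by rw [hαdef, sq_abs]; exact hcase
    have hαnn : 0 ≤ α := abs_nonneg a
    have hα1 : 1 ≤ α := by
      by_contra h
      push_neg at h
      have h1 : α ^ 2 ≤ 1 := pow_le_one₀ hαnn h.le
      linarith
    have hα0 : (0:ℝ) < α := by linarith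
    have haα : a ^ 2 = α ^ 2 := (sq_abs a).symm
    have hcore : τ * (α ^ 2)⁻¹ ≤ 2 * D⁻¹ := by
      have hτD : τ * D = τ + α ^ 2 := by
        rw [hDdef, haα]; field_simp
      have h2 : τ * D ≤ 2 * α ^ 2 := by rw [hτD]; linarith
      calc τ * (α ^ 2)⁻¹ = (τ * D) * (D⁻¹ * (α ^ 2)⁻¹) := by
            field_simp
      _ ≤ (2 * α ^ 2) * (D⁻¹ * (α ^ 2)⁻¹) := by
            apply mul_le_mul_of_nonneg_right h2; positivity
      _ = 2 * D⁻¹ := by field_simp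
    set S : Set E3 := Metric.ball 0 (α/2) with hSdef
    have hSm : MeasurableSet S := measurableSet_ball
    rw [← integral_add_compl hSm hf_int]
    -- Near part
    have hnear : (∫ y in S, φ y * ψ y) ≤ 4*Ψ₁*D⁻¹ := by
      have hptw : ∀ y ∈ S, φ y * ψ y ≤ (4*D⁻¹) * ψ y := by
        intro y hy
        have hyS : ‖y‖ < α/2 := by
          rw [hSdef, Metric.mem_ball, dist_zero_right] at hy; exact hy
        have htri : α ≤ |‖x - y‖ - c*t| + ‖y‖ := by
          have h1 : |‖x‖ - ‖x - y‖| ≤ ‖y‖ := by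
            have h2 := abs_norm_sub_norm_le x (x - y)
            rwa [sub_sub_cancel] at h2
          calc α = |(‖x - y‖ - c*t) + (‖x‖ - ‖x - y‖)| := by
                rw [hαdef, hadef]; congr 1; ring
          _ ≤ |‖x - y‖ - c*t| + |‖x‖ - ‖x - y‖| := abs_add_le _ _
          _ ≤ |‖x - y‖ - c*t| + ‖y‖ := by linarith
        have h2 : α/2 ≤ |‖x - y‖ - c*t| := by linarith
        have h3 : α^2/4 ≤ (‖x - y‖ - c*t)^2 := by
          have h4 : (α/2)^2 ≤ |‖x - y‖ - c*t|^2 := pow_le_pow_left₀ (by positivity) h2 2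
          rw [sq_abs] at h4
          calc α^2/4 = (α/2)^2 := by ring
          _ ≤ _ := h4
        have hb0 : (0:ℝ) < 1 + α^2/(4*τ) := by positivity
        have hφy : φ y ≤ 4*D⁻¹ := by
          have hD4 : D ≤ 4*(1 + α^2/(4*τ)) := by
            have he : 4*(1 + α^2/(4*τ)) = 4 + α^2/τ := by field_simp
            rw [hDdef, haα, he]
            linarith
          calc φ y ≤ (1 + α^2/(4*τ)) ^ (-N) := by
                apply Real.rpow_le_rpow_of_nonpos hb0 ?_ (by linarith)
                rw [show α^2/(4*τ) = (α^2/4)/τ from (div_div _ _ _).symm]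
                have := h3
                gcongr
          _ ≤ (1 + α^2/(4*τ)) ^ (-1:ℝ) :=
                Real.rpow_le_rpow_of_exponent_le (le_add_of_nonneg_right (by positivity)) (by linarith)
          _ = (1 + α^2/(4*τ))⁻¹ := Real.rpow_neg_one _
          _ ≤ 4*D⁻¹ := by
                calc (1 + α^2/(4*τ))⁻¹ = 4*(4*(1+α^2/(4*τ)))⁻¹ := by
                      rw [mul_inv]; field_simp
                _ ≤ 4*D⁻¹ := by
                      apply mul_le_mul_of_nonneg_left _ (by norm_num : (0:ℝ) ≤ 4)
                      exact inv_anti₀ hD0 hD4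
        exact mul_le_mul_of_nonneg_right hφy (hψnn y)
      calc (∫ y in S, φ y * ψ y) ≤ ∫ y in S, (4*D⁻¹) * ψ y :=
            setIntegral_mono_on hf_int.integrableOn ((hΨ₁i.const_mul _).integrableOn) hSm hptw
      _ ≤ ∫ y, (4*D⁻¹) * ψ y :=
            setIntegral_le_integral (hΨ₁i.const_mul _)
              (Filter.Eventually.of_forall fun y => mul_nonneg (by positivity) (hψnn y))
      _ = 4*D⁻¹*Ψ₁ := by rw [integral_const_mul]
      _ = 4*Ψ₁*D⁻¹ := by ring
    -- Far part
    have hfar : (∫ y in Sᶜ, φ y * ψ y) ≤ 2*K*D⁻¹ + 2*(4:ℝ)^((5:ℝ)/3)*Ψ₂*D⁻¹ := by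
      set M : ℝ := N * (5/2) with hMdef
      have hM2 : 2 ≤ M := by rw [hMdef]; linarith
      set L : ℝ := τ^(-(3:ℝ)/5) * α^(-(4:ℝ)/5) with hLdef
      have hL0 : 0 < L := by rw [hLdef]; positivity
      have hct : 0 ≤ c * t := mul_nonneg hc.le ht
      have hshell : Integrable (fun z : E3 => (1 + (‖z‖ - c*t)^2/τ)^(-M)) :=
        shell_integrable hτ hct hM2
      have hshell_x : Integrable (fun y : E3 => (1 + (‖x - y‖ - c*t)^2/τ)^(-M)) :=
        hshell.comp_sub_left x
      set c₂ : ℝ := L⁻¹^((5:ℝ)/3) * (1+α^2/4)^(-((5:ℝ)/3)) with hc₂def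
      have hc₂0 : 0 ≤ c₂ := by rw [hc₂def]; positivity
      have hg_int : Integrable (fun y : E3 => L^((5:ℝ)/2) * (1 + (‖x - y‖ - c*t)^2/τ)^(-M)
          + c₂ * (1+‖y‖^2)^(-s₂)) := (hshell_x.const_mul _).add (hΨ₂i.const_mul _)
      have hptw2 : ∀ y ∈ Sᶜ, φ y * ψ y ≤ L^((5:ℝ)/2) * (1 + (‖x - y‖ - c*t)^2/τ)^(-M)
          + c₂ * (1+‖y‖^2)^(-s₂) := by
        intro y hy
        have hyge : α/2 ≤ ‖y‖ := by
          rw [hSdef] at hy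
          simp only [Set.mem_compl_iff, Metric.mem_ball, dist_zero_right, not_lt] at hy
          exact hy
        have hX1 : (0:ℝ) < 1 + (‖x - y‖ - c*t)^2/τ := by positivity
        have hX2 : (0:ℝ) < 1 + ‖y‖^2 := by positivity
        have hy2 : 1 + α^2/4 ≤ 1 + ‖y‖^2 := by
          have h4 : (α/2)^2 ≤ ‖y‖^2 := pow_le_pow_left₀ (by positivity) hyge 2
          have h5 : α^2/4 = (α/2)^2 := by ring
          linarith
        have e1 : (L * φ y)^((5:ℝ)/2) = L^((5:ℝ)/2) * (1 + (‖x - y‖ - c*t)^2/τ)^(-M) := by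
          rw [Real.mul_rpow hL0.le (hφnn y)]
          congr 1
          show ((1 + (‖x - y‖ - c*t)^2/τ)^(-N))^((5:ℝ)/2) = _
          rw [← Real.rpow_mul hX1.le]
          congr 1
          rw [hMdef]; ring
        have e2 : (L⁻¹ * ψ y)^((5:ℝ)/3)
            = L⁻¹^((5:ℝ)/3) * ((1+‖y‖^2)^(-((5:ℝ)/3)) * (1+‖y‖^2)^(-s₂)) := by
          rw [Real.mul_rpow (by positivity) (hψnn y)]
          congr 1
          show ((1 + ‖y‖^2)^(-r₂))^((5:ℝ)/3) = _
          rw [← Real.rpow_mul hX2.le, ← Real.rpow_add hX2]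
          congr 1
          rw [hs₂def]; ring
        calc φ y * ψ y = (L * φ y) * (L⁻¹ * ψ y) := by
              field_simp
        _ ≤ (L * φ y)^((5:ℝ)/2) + (L⁻¹ * ψ y)^((5:ℝ)/3) :=
              young_aux (mul_nonneg hL0.le (hφnn y)) (mul_nonneg (by positivity) (hψnn y))
        _ ≤ _ := by
              rw [e1, e2]
              apply add_le_add_right
              rw [hc₂def, mul_assoc]
              apply mul_le_mul_of_nonneg_left _ (by positivity)
              apply mul_le_mul_of_nonneg_right _ (Real.rpow_nonneg hX2.le _)
              exact Real.rpow_le_rpow_of_nonpos (by positivity) hy2 (by norm_num)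
      have hsqrtτ : Real.sqrt τ = τ^((1:ℝ)/2) := by
        rw [Real.sqrt_eq_rpow]
      have hτ2 : (τ:ℝ)^2 = τ^((2:ℝ)) := by
        rw [show ((2:ℝ)) = ((2:ℕ):ℝ) by norm_num, Real.rpow_natCast]
      have hα2inv : α^(-(2:ℝ)) = (α^2)⁻¹ := by
        rw [Real.rpow_neg hα0.le]
        congr 1
        rw [show ((2:ℝ)) = ((2:ℕ):ℝ) by norm_num, Real.rpow_natCast]
      have hL52 : L^((5:ℝ)/2) = τ^(-(3:ℝ)/2) * (α^2)⁻¹ := by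
        rw [hLdef, Real.mul_rpow (by positivity) (by positivity),
          ← Real.rpow_mul hτ0.le, ← Real.rpow_mul hα0.le,
          show (-(3:ℝ)/5 * (5/2)) = -(3:ℝ)/2 by norm_num,
          show (-(4:ℝ)/5 * (5/2)) = -(2:ℝ) by norm_num, hα2inv]
      have hτcollect : τ^(-(3:ℝ)/2) * (Real.sqrt τ * τ^2) = τ := by
        rw [hsqrtτ, hτ2, ← Real.rpow_add hτ0, ← Real.rpow_add hτ0]
        norm_num
      have ht2 : τ + (c*t)^2 ≤ (1+c^2)*τ^2 := by
        have htτ : t ≤ τ := by rw [hτdef]; linarith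
        have ht2' : t^2 ≤ τ^2 := pow_le_pow_left₀ ht htτ 2
        have hττ : τ ≤ τ^2 := by
          calc τ = τ * 1 := by ring
          _ ≤ τ * τ := mul_le_mul_of_nonneg_left hτ (by positivity)
          _ = τ^2 := by ring
        have hc2 : c^2*t^2 ≤ c^2*τ^2 := mul_le_mul_of_nonneg_left ht2' (sq_nonneg c)
        have e1 : (c*t)^2 = c^2*t^2 := by ring
        have e2 : (1+c^2)*τ^2 = τ^2 + c^2*τ^2 := by ring
        linarith
      have hterm1 : L^((5:ℝ)/2) * (6*π*V*(Real.sqrt τ*(τ + (c*t)^2))) ≤ 2*K*D⁻¹ := by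
        have hmid : τ^(-(3:ℝ)/2)*(Real.sqrt τ*(τ+(c*t)^2)) ≤ (1+c^2)*τ := by
          calc τ^(-(3:ℝ)/2)*(Real.sqrt τ*(τ+(c*t)^2))
              ≤ τ^(-(3:ℝ)/2)*(Real.sqrt τ*((1+c^2)*τ^2)) := by
                apply mul_le_mul_of_nonneg_left
                  (mul_le_mul_of_nonneg_left ht2 (Real.sqrt_nonneg τ)) (by positivity)
          _ = (1+c^2) * (τ^(-(3:ℝ)/2)*(Real.sqrt τ*τ^2)) := by ring
          _ = (1+c^2)*τ := by rw [hτcollect]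
        calc L^((5:ℝ)/2) * (6*π*V*(Real.sqrt τ*(τ + (c*t)^2)))
            = (6*π*V) * ((α^2)⁻¹ * (τ^(-(3:ℝ)/2)*(Real.sqrt τ*(τ + (c*t)^2)))) := by
              rw [hL52]; ring
        _ ≤ (6*π*V) * ((α^2)⁻¹ * ((1+c^2)*τ)) := by
              apply mul_le_mul_of_nonneg_left _ (by positivity)
              exact mul_le_mul_of_nonneg_left hmid (by positivity)
        _ = K * (τ * (α^2)⁻¹) := by rw [hKdef]; ring
        _ ≤ K * (2*D⁻¹) := mul_le_mul_of_nonneg_left hcore hK0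
        _ = 2*K*D⁻¹ := by ring
      have hterm2 : c₂ * Ψ₂ ≤ 2*(4:ℝ)^((5:ℝ)/3)*Ψ₂*D⁻¹ := by
        have hLinv53 : L⁻¹^((5:ℝ)/3) = τ * α^((4:ℝ)/3) := by
          rw [hLdef, mul_inv, ← Real.rpow_neg hτ0.le, ← Real.rpow_neg hα0.le,
            Real.mul_rpow (by positivity) (by positivity),
            ← Real.rpow_mul hτ0.le, ← Real.rpow_mul hα0.le]
          norm_num
        have h2a : (1+α^2/4)^(-((5:ℝ)/3)) ≤ (4:ℝ)^((5:ℝ)/3) * (α^2)^(-((5:ℝ)/3)) := by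
          calc (1+α^2/4)^(-((5:ℝ)/3)) ≤ (α^2/4)^(-((5:ℝ)/3)) :=
                Real.rpow_le_rpow_of_nonpos (by positivity) (by linarith) (by norm_num)
          _ = (4:ℝ)^((5:ℝ)/3) * (α^2)^(-((5:ℝ)/3)) := by
              rw [Real.div_rpow (sq_nonneg α) (by norm_num : (0:ℝ) ≤ 4),
                Real.rpow_neg (by norm_num : (0:ℝ) ≤ 4), div_inv_eq_mul, mul_comm]
        have hα43 : α^((4:ℝ)/3) * (α^2)^(-((5:ℝ)/3)) = (α^2)⁻¹ := by
          rw [← hα2inv, show ((α:ℝ)^2) = α^((2:ℝ)) by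
              rw [show ((2:ℝ)) = ((2:ℕ):ℝ) by norm_num, Real.rpow_natCast],
            ← Real.rpow_mul hα0.le, ← Real.rpow_add hα0]
          norm_num
        have hc₂b : c₂ ≤ (4:ℝ)^((5:ℝ)/3) * (τ * (α^2)⁻¹) := by
          rw [hc₂def, hLinv53]
          calc τ * α^((4:ℝ)/3) * (1+α^2/4)^(-((5:ℝ)/3))
              ≤ τ * α^((4:ℝ)/3) * ((4:ℝ)^((5:ℝ)/3) * (α^2)^(-((5:ℝ)/3))) := by
                apply mul_le_mul_of_nonneg_left h2a (by positivity)
          _ = (4:ℝ)^((5:ℝ)/3) * (τ * (α^((4:ℝ)/3) * (α^2)^(-((5:ℝ)/3)))) := by ring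
          _ = (4:ℝ)^((5:ℝ)/3) * (τ * (α^2)⁻¹) := by rw [hα43]
        calc c₂ * Ψ₂ ≤ ((4:ℝ)^((5:ℝ)/3) * (τ * (α^2)⁻¹)) * Ψ₂ :=
              mul_le_mul_of_nonneg_right hc₂b hΨ₂0
        _ ≤ ((4:ℝ)^((5:ℝ)/3) * (2*D⁻¹)) * Ψ₂ := by
              apply mul_le_mul_of_nonneg_right _ hΨ₂0
              exact mul_le_mul_of_nonneg_left hcore (by positivity)
        _ = 2*(4:ℝ)^((5:ℝ)/3)*Ψ₂*D⁻¹ := by ring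
      calc (∫ y in Sᶜ, φ y * ψ y)
          ≤ ∫ y in Sᶜ, (L^((5:ℝ)/2) * (1 + (‖x - y‖ - c*t)^2/τ)^(-M) + c₂ * (1+‖y‖^2)^(-s₂)) :=
            setIntegral_mono_on hf_int.integrableOn hg_int.integrableOn hSm.compl hptw2
      _ ≤ ∫ y, (L^((5:ℝ)/2) * (1 + (‖x - y‖ - c*t)^2/τ)^(-M) + c₂ * (1+‖y‖^2)^(-s₂)) := by
            apply setIntegral_le_integral hg_int
            apply Filter.Eventually.of_forall fun y => ?_
            have := Real.rpow_nonneg (show (0:ℝ) ≤ 1 + (‖x - y‖ - c*t)^2/τ by positivity) (-M)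
            have := Real.rpow_nonneg (show (0:ℝ) ≤ 1 + ‖y‖^2 by positivity) (-s₂)
            positivity
      _ = L^((5:ℝ)/2) * (∫ y, (1 + (‖x - y‖ - c*t)^2/τ)^(-M)) + c₂ * Ψ₂ := by
            rw [integral_add (hshell_x.const_mul _) (hΨ₂i.const_mul _),
              integral_const_mul, integral_const_mul, hΨ₂def]
      _ = L^((5:ℝ)/2) * (∫ z : E3, (1 + (‖z‖ - c*t)^2/τ)^(-M)) + c₂ * Ψ₂ := by
            rw [integral_sub_left_eq_self (fun z : E3 => (1 + (‖z‖ - c*t)^2/τ)^(-M)) volume x]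
      _ ≤ L^((5:ℝ)/2) * (6*π*V*(Real.sqrt τ*(τ + (c*t)^2))) + c₂ * Ψ₂ := by
            apply add_le_add_left
            apply mul_le_mul_of_nonneg_left _ (by positivity)
            have hb := shell_bound (τ := τ) (b := c*t) (m := M) hτ hct hM2
            calc (∫ z : E3, (1 + (‖z‖ - c*t)^2/τ)^(-M))
                ≤ 6*π*(volume (Metric.ball (0:E3) 1)).toReal*(Real.sqrt τ*(τ + (c*t)^2)) := hb
            _ = 6*π*V*(Real.sqrt τ*(τ + (c*t)^2)) := by rw [← hVdef]
      _ ≤ 2*K*D⁻¹ + 2*(4:ℝ)^((5:ℝ)/3)*Ψ₂*D⁻¹ := add_le_add hterm1 hterm2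
    calc (∫ y in S, φ y * ψ y) + (∫ y in Sᶜ, φ y * ψ y)
        ≤ 4*Ψ₁*D⁻¹ + (2*K*D⁻¹ + 2*(4:ℝ)^((5:ℝ)/3)*Ψ₂*D⁻¹) := by linarith
    _ = (4*Ψ₁ + 2*K + 2*(4:ℝ)^((5:ℝ)/3)*Ψ₂) * D⁻¹ := by ring
    _ ≤ C * D⁻¹ := by
        apply mul_le_mul_of_nonneg_right _ hDinv0.le
        rw [hCdef]; linarith
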